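/- Let A = 5+2√6, B = 3+√6, C = 4+2√6 and λ² = 120+48√6 = 24(5+2√6). Let t, r, x, y, u₁, u₂, u₃ ∈ ℂ with t + r = 2B and x + y = 0, and let M be the symmetric 5×5 complex matrix with rows: row 1 = (1, A, B, B, C); row 2 = (A, 1, t, r, −C); row 3 = (B, t, u₁, u₂, x); row 4 = (B, r, u₂, u₃, y); row 5 = (C, −C, x, y, C). If M · M^† = λ²·I₅ (where M^† is the conjugate transpose), then x = y = 0, t = r = 3+√6, u₁ = u₃, and u₂ = −(6+2√6) − u₃. -/

import Mathlib

/-- Key intermediate step in the proof of Theorem 3.2: the partially known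
`5×5` matrix `λ·Ŝ` of the rank-10 super-modular category, with `t + r = 2(3+√6)`
and `x + y = 0`, is forced by unitarity (`M·M^† = λ²·I₅`) to have
`x = y = 0`, `t = r = 3+√6`, `u₁ = u₃` and `u₂ = −(6+2√6) − u₃`. -/
theorem super_modular_partial_unitarity
    (t r x y u₁ u₂ u₃ : ℂ)
    (htr : t + r = 2 * (3 + (Real.sqrt 6 : ℂ)))
    (hxy : x + y = 0)
    (M : Matrix (Fin 5) (Fin 5) ℂ)
    (hM : M =
      !![1, 5 + 2 * (Real.sqrt 6 : ℂ), 3 + (Real.sqrt 6 : ℂ), 3 + (Real.sqrt 6 : ℂ),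
           4 + 2 * (Real.sqrt 6 : ℂ);
         5 + 2 * (Real.sqrt 6 : ℂ), 1, t, r, -(4 + 2 * (Real.sqrt 6 : ℂ));
         3 + (Real.sqrt 6 : ℂ), t, u₁, u₂, x;
         3 + (Real.sqrt 6 : ℂ), r, u₂, u₃, y;
         4 + 2 * (Real.sqrt 6 : ℂ), -(4 + 2 * (Real.sqrt 6 : ℂ)), x, y,
           4 + 2 * (Real.sqrt 6 : ℂ)])
    (hunit : M * M.conjTranspose = ((120 + 48 * (Real.sqrt 6 : ℂ)) : ℂ) • 1) :
    x = 0 ∧ y = 0 ∧ t = 3 + (Real.sqrt 6 : ℂ) ∧ r = 3 + (Real.sqrt 6 : ℂ) ∧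
      u₁ = u₃ ∧ u₂ = -(6 + 2 * (Real.sqrt 6 : ℂ)) - u₃ := by
  subst hM
  set s : ℂ := (Real.sqrt 6 : ℂ) with hs
  have hs2 : s ^ 2 = 6 := by
    rw [hs]; norm_cast; rw [Real.sq_sqrt]; norm_num
  have hsre : (0:ℝ) ≤ Real.sqrt 6 := Real.sqrt_nonneg 6
  have hC : (4 + 2 * s : ℂ) ≠ 0 := by
    intro h; apply_fun Complex.re at h; simp [hs] at h; linarith
  have hB : (3 + s : ℂ) ≠ 0 := by
    intro h; apply_fun Complex.re at h; simp [hs] at h; linarith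
  have hcs : (starRingEnd ℂ) s = s := by rw [hs]; exact Complex.conj_ofReal _
  have hy : y = -x := by linear_combination hxy
  subst hy
  have e55 := congrFun (congrFun hunit 4) 4
  simp only [Matrix.mul_apply, Fin.sum_univ_five, Matrix.conjTranspose_apply,
    Matrix.smul_apply, Matrix.one_apply, map_add, map_mul, map_neg, map_one,
    map_ofNat, Complex.conj_ofReal, Matrix.cons_val_zero,
    Matrix.cons_val_one, Matrix.head_cons, Matrix.cons_val_fin_one, Matrix.empty_val',
    Matrix.head_fin_const, Matrix.cons_val_four, Matrix.cons_val_succ,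
    Matrix.cons_val_two, Matrix.cons_val_three, Matrix.tail_cons, Matrix.of_apply, Matrix.cons_val] at e55
  norm_num at e55
  rw [hcs] at e55
  have hxc : x * (starRingEnd ℂ) x = 0 := by
    linear_combination (1/2 : ℂ) * e55 - 6 * hs2
  have hx : x = 0 := by
    have := Complex.mul_conj x
    rw [hxc] at this
    have h0 : Complex.normSq x = 0 := by exact_mod_cast this.symm
    exact Complex.normSq_eq_zero.mp h0
  subst hx
  have e35 := congrFun (congrFun hunit 2) 4
  simp only [Matrix.mul_apply, Fin.sum_univ_five, Matrix.conjTranspose_apply,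
    Matrix.smul_apply, Matrix.one_apply, map_add, map_mul, map_neg, map_one,
    map_ofNat, map_zero, Complex.conj_ofReal, Matrix.cons_val_zero,
    Matrix.cons_val_one, Matrix.head_cons, Matrix.cons_val_fin_one, Matrix.empty_val',
    Matrix.head_fin_const, Matrix.cons_val_four, Matrix.cons_val_succ,
    Matrix.cons_val_two, Matrix.cons_val_three, Matrix.tail_cons, Matrix.of_apply, Matrix.cons_val] at e35
  norm_num at e35
  rw [hcs, if_neg (by decide : ¬((2:Fin 5) = 4))] at e35
  have ht0 : (t - (3 + s)) * (4 + 2 * s) = 0 := by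
    linear_combination -e35
  have ht : t = 3 + s := by
    rcases mul_eq_zero.mp ht0 with h | h
    · linear_combination h
    · exact absurd h hC
  subst ht
  have hr : r = 3 + s := by linear_combination htr
  subst hr
  have e31 := congrFun (congrFun hunit 2) 0
  have e41 := congrFun (congrFun hunit 3) 0
  simp only [Matrix.mul_apply, Fin.sum_univ_five, Matrix.conjTranspose_apply,
    Matrix.smul_apply, Matrix.one_apply, map_add, map_mul, map_neg, map_one,
    map_ofNat, map_zero, Complex.conj_ofReal, Matrix.cons_val_zero,
    Matrix.cons_val_one, Matrix.head_cons, Matrix.cons_val_fin_one, Matrix.empty_val',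
    Matrix.head_fin_const, Matrix.cons_val_four, Matrix.cons_val_succ,
    Matrix.cons_val_two, Matrix.cons_val_three, Matrix.tail_cons, Matrix.of_apply, Matrix.cons_val] at e31 e41
  norm_num at e31 e41
  rw [hcs] at e31 e41
  rw [if_neg (by decide : ¬((3:Fin 5) = 0))] at e41
  rw [if_neg (by decide : ¬((2:Fin 5) = 0))] at e31
  have h1 : (u₁ - u₃) * (3 + s) = 0 := by linear_combination e31 - e41
  have h2 : (u₂ + u₃ + (6 + 2 * s)) * (3 + s) = 0 := by linear_combination e41
  have hu13 : u₁ = u₃ := by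
    rcases mul_eq_zero.mp h1 with h | h
    · linear_combination h
    · exact absurd h hB
  have hu2 : u₂ = -(6 + 2 * s) - u₃ := by
    rcases mul_eq_zero.mp h2 with h | h
    · linear_combination h
    · exact absurd h hB
  exact ⟨rfl, by simp, rfl, rfl, hu13, hu2⟩
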